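/- arXiv:2203.12253 — 3 statements merged into one kernel-verified Lean document; each statement's English description precedes it below -/
import Mathlib

section
/- For any model M, any world w of M, and any PL-formulas α, β: M,w ⊨ Kh(α→β) if and only if for every submodel M' of M (every M' = ⟨W',V|_{W'}⟩ with ∅ ≠ W' ⊆ W), M' ⊨ Kh α implies M' ⊨ Kh β. -/
/-- Formulas of the propositional language `PL` over atoms `P`. -/
inductive PLForm (P : Type) : Type
  | atom : P → PLForm P
  | bot  : PLForm P
  | and  : PLForm P → PLForm P → PLForm P
  | or   : PLForm P → PLForm P → PLForm P
  | imp  : PLForm P → PLForm P → PLForm P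

/-- `¬α` abbreviates `α → ⊥`. -/
def PLForm.neg {P : Type} (α : PLForm P) : PLForm P := α.imp .bot

/-- The resolution space `S(α)`, realized as a type: `S(p)` and `S(⊥)` are
singletons, `S(α∨β)` is the disjoint union, `S(α∧β)` the product, and
`S(α→β)` the full function space. -/
def RS (P : Type) : PLForm P → Type
  | .atom _  => Unit
  | .bot     => Unit
  | .or a b  => RS P a ⊕ RS P b
  | .and a b => RS P a × RS P b
  | .imp a b => RS P a → RS P b

/-- An epistemic (information) model over atoms `P` with worlds `W`:
`W` is nonempty and `V` a valuation. -/
structure Model (P W : Type) where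
  ne : Nonempty W
  V : W → Set P

/-- The actual resolutions `R(w,α) ⊆ S(α)` at a world `w`. -/
def Res {P W : Type} (M : Model P W) (w : W) : (α : PLForm P) → Set (RS P α)
  | .atom p  => {_u : Unit | p ∈ M.V w}
  | .bot     => ∅
  | .or a b  => (Sum.inl '' Res M w a) ∪ (Sum.inr '' Res M w b)
  | .and a b => (Res M w a) ×ˢ (Res M w b)
  | .imp a b => {f : RS P a → RS P b | f '' Res M w a ⊆ Res M w b}

/-- Formulas of the dynamic epistemic language `DELKh`. -/
inductive DForm (P : Type) : Type
  | atom : P → DForm P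
  | bot  : DForm P
  | and  : DForm P → DForm P → DForm P
  | or   : DForm P → DForm P → DForm P
  | imp  : DForm P → DForm P → DForm P
  | K    : DForm P → DForm P
  | box  : DForm P → DForm P
  | kh   : PLForm P → DForm P

def DForm.neg {P : Type} (φ : DForm P) : DForm P := φ.imp .bot
def DForm.dia {P : Type} (φ : DForm P) : DForm P := (DForm.box φ.neg).neg
def DForm.biImp {P : Type} (φ ψ : DForm P) : DForm P := (φ.imp ψ).and (ψ.imp φ)

/-- Embedding of `PL` into `DELKh`. -/
def PLForm.toD {P : Type} : PLForm P → DForm P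
  | .atom p  => .atom p
  | .bot     => .bot
  | .and a b => (toD a).and (toD b)
  | .or a b  => (toD a).or (toD b)
  | .imp a b => (toD a).imp (toD b)

/-- The submodel of `M` determined by a nonempty set `s` of worlds,
with the restricted valuation. -/
def Model.restrict {P W : Type} (M : Model P W) (s : Set W) (h : s.Nonempty) :
    Model P s :=
  { ne := ⟨⟨h.choose, h.choose_spec⟩⟩, V := fun w => M.V w.1 }

/-- Satisfaction of `DELKh`-formulas at a pointed model `(M,w)`. -/
def Sat (P : Type) : (W : Type) → Model P W → W → DForm P → Prop
  | _, M, w, .atom p  => p ∈ M.V w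
  | _, _, _, .bot     => False
  | W, M, w, .and a b => Sat P W M w a ∧ Sat P W M w b
  | W, M, w, .or a b  => Sat P W M w a ∨ Sat P W M w b
  | W, M, w, .imp a b => Sat P W M w a → Sat P W M w b
  | W, M, _, .K φ     => ∀ v : W, Sat P W M v φ
  | W, M, w, .box φ   =>
      ∀ (s : Set W) (h : w ∈ s), Sat P s (M.restrict s ⟨w, h⟩) ⟨w, h⟩ φ
  | W, M, _, .kh α    => ∃ x : RS P α, ∀ v : W, x ∈ Res M v α

/-- A `DELKh`-formula is valid if it holds at every pointed model. -/
def Valid {P : Type} (φ : DForm P) : Prop :=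
  ∀ (W : Type) (M : Model P W) (w : W), Sat P W M w φ

/-- Semantic entailment from a set of `DELKh`-formulas. -/
def EntailsSet {P : Type} (Γ : Set (DForm P)) (φ : DForm P) : Prop :=
  ∀ (W : Type) (M : Model P W) (w : W),
    (∀ ψ ∈ Γ, Sat P W M w ψ) → Sat P W M w φ

/-- Classical satisfaction of `PL`-formulas at a pointed model. -/
def PLSat {P W : Type} (M : Model P W) (w : W) : PLForm P → Prop
  | .atom p  => p ∈ M.V w
  | .bot     => False
  | .and a b => PLSat M w a ∧ PLSat M w b
  | .or a b  => PLSat M w a ∨ PLSat M w b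
  | .imp a b => PLSat M w a → PLSat M w b

/-- Inquisitive support of `PL`-formulas at a state `s` of a model `M`. -/
def Support (P W : Type) (M : Model P W) : Set W → PLForm P → Prop
  | s, .atom p  => ∀ w ∈ s, p ∈ M.V w
  | s, .bot     => s = ∅
  | s, .and a b => Support P W M s a ∧ Support P W M s b
  | s, .or a b  => Support P W M s a ∨ Support P W M s b
  | s, .imp a b => ∀ t ⊆ s, Support P W M t a → Support P W M t b

instance RS.nonempty (P : Type) : ∀ α : PLForm P, Nonempty (RS P α)
  | .atom _ => ⟨()⟩
  | .bot => ⟨()⟩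
  | .or a _ => (RS.nonempty P a).elim fun x => ⟨Sum.inl x⟩
  | .and a b => (RS.nonempty P a).elim fun x => (RS.nonempty P b).elim fun y => ⟨(x, y)⟩
  | .imp a b => (RS.nonempty P b).elim fun y => ⟨fun _ => y⟩

theorem Res_restrict {P W : Type} (M : Model P W) (s : Set W) (h : s.Nonempty) :
    ∀ (α : PLForm P) (v : s), Res (M.restrict s h) v α = Res M v.1 α
  | .atom _, _ => rfl
  | .bot, _ => rfl
  | .or a b, v => by
      simp only [Res, Res_restrict M s h a v, Res_restrict M s h b v]
  | .and a b, v => by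
      simp only [Res, Res_restrict M s h a v, Res_restrict M s h b v]; rfl
  | .imp a b, v => by
      simp only [Res, Res_restrict M s h a v, Res_restrict M s h b v]

/-- `M,w ⊨ Kh(α→β)` iff for every (nonempty) submodel `M'` of `M`,
`M' ⊨ Kh α` implies `M' ⊨ Kh β`. -/
theorem kh_imp_via_submodels {P W : Type} [Countable P] (M : Model P W) (w : W)
    (α β : PLForm P) :
    Sat P W M w (.kh (α.imp β)) ↔
      ∀ (s : Set W) (h : s.Nonempty),
        (∀ v : s, Sat P s (M.restrict s h) v (.kh α)) →
        (∀ v : s, Sat P s (M.restrict s h) v (.kh β)) := by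
  constructor
  · rintro ⟨f, hf⟩ s hs hα v
    obtain ⟨x, hx⟩ := hα ⟨hs.choose, hs.choose_spec⟩
    refine ⟨f x, fun u => ?_⟩
    simp only [Res_restrict] at hx ⊢
    exact hf u.1 ⟨x, hx u, rfl⟩
  · intro H
    classical
    have key : ∀ x : RS P α, ∃ y : RS P β,
        ∀ v : W, x ∈ Res M v α → y ∈ Res M v β := by
      intro x
      by_cases hx : ∃ v : W, x ∈ Res M v α
      · set s : Set W := {v | x ∈ Res M v α} with hsdef
        have hs : s.Nonempty := hx
        obtain ⟨y, hy⟩ := H s hs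
          (fun v => ⟨x, fun u => by rw [Res_restrict]; exact u.2⟩)
          ⟨hs.choose, hs.choose_spec⟩
        refine ⟨y, fun v hv => ?_⟩
        have := hy ⟨v, hv⟩
        rwa [Res_restrict] at this
      · exact ⟨(RS.nonempty P β).some, fun v hv => absurd ⟨v, hv⟩ hx⟩
    choose f hf using key
    exact ⟨f, fun v => by rintro _ ⟨x, hx, rfl⟩; exact hf x v hx⟩
end

section
/- Persistence: for every PL-formula α, the DELKh-formula Kh α ↔ □Kh α is valid (once the agent knows how to resolve α, this persists under any informational update to a submodel). -/
lemma res_restrict {P W : Type} (M : Model P W) (s : Set W) (h : s.Nonempty)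
    (v : s) (α : PLForm P) : Res (M.restrict s h) v α = Res M v.1 α := by
  induction α with
  | atom p => rfl
  | bot => rfl
  | and a b iha ihb => simp [Res, iha, ihb]; rfl
  | or a b iha ihb => simp [Res, iha, ihb]
  | imp a b iha ihb => simp [Res, iha, ihb]

/-- persistence: `Kh α ↔ □Kh α` is valid. -/
theorem kh_persistence {P : Type} [Countable P] (α : PLForm P) :
    Valid ((DForm.kh α).biImp (DForm.box (.kh α))) := by
  intro W M w
  constructor
  · rintro ⟨x, hx⟩ s hw
    exact ⟨x, fun v => (res_restrict M s ⟨w, hw⟩ v α) ▸ hx v.1⟩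
  · intro hbox
    obtain ⟨x, hx⟩ := hbox Set.univ trivial
    exact ⟨x, fun v => (res_restrict M Set.univ ⟨w, trivial⟩ ⟨v, trivial⟩ α) ▸ hx ⟨v, trivial⟩⟩
end

section
/- Main correspondence theorem: for any PL-formula α and any set Γ of PL-formulas, Γ inquisitively entails α (Γ ⊩ α: for every model M and every state s ⊆ W_M, if M,s ⊩ γ for all γ ∈ Γ then M,s ⊩ α) if and only if Kh Γ ⊨ Kh α, where Kh Γ = {Kh γ : γ ∈ Γ} and ⊨ is semantic entailment over pointed epistemic models in the knowing-how semantics. -/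
/-- Inquisitive entailment: `Γ ⊩ α`. -/
def InqEntails {P : Type} (Γ : Set (PLForm P)) (α : PLForm P) : Prop :=
  ∀ (W : Type) (M : Model P W) (s : Set W),
    (∀ γ ∈ Γ, Support P W M s γ) → Support P W M s α

instance rs_nonempty {P : Type} (α : PLForm P) : Nonempty (RS P α) := by
  induction α with
  | atom p => exact ⟨()⟩
  | bot => exact ⟨()⟩
  | and a b iha ihb => exact ⟨⟨iha.some, ihb.some⟩⟩
  | or a b iha ihb => exact ⟨Sum.inl iha.some⟩
  | imp a b iha ihb => exact ⟨fun _ => ihb.some⟩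

lemma res_congr {P W W' : Type} (M : Model P W) (M' : Model P W') (w : W) (w' : W')
    (h : M.V w = M'.V w') (α : PLForm P) : Res M w α = Res M' w' α := by
  induction α with
  | atom p => simp [Res, h]
  | bot => rfl
  | and a b iha ihb => simp [Res, iha, ihb]; rfl
  | or a b iha ihb => simp [Res, iha, ihb]
  | imp a b iha ihb => simp [Res, iha, ihb]

lemma support_iff {P W : Type} (M : Model P W) (α : PLForm P) (s : Set W) :
    Support P W M s α ↔ ∃ x : RS P α, ∀ w ∈ s, x ∈ Res M w α := by
  induction α generalizing s with
  | atom p =>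
    constructor
    · intro h; exact ⟨(), fun w hw => h w hw⟩
    · rintro ⟨x, hx⟩ w hw; exact hx w hw
  | bot =>
    constructor
    · intro h; subst h; exact ⟨(), fun w hw => absurd hw (by simp)⟩
    · rintro ⟨x, hx⟩
      ext w; simp only [Set.mem_empty_iff_false, iff_false]
      intro hw; exact hx w hw
  | and a b iha ihb =>
    constructor
    · rintro ⟨ha, hb⟩
      obtain ⟨x, hx⟩ := (iha s).mp ha
      obtain ⟨y, hy⟩ := (ihb s).mp hb
      exact ⟨⟨x, y⟩, fun w hw => ⟨hx w hw, hy w hw⟩⟩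
    · rintro ⟨⟨x, y⟩, hxy⟩
      exact ⟨(iha s).mpr ⟨x, fun w hw => (hxy w hw).1⟩,
             (ihb s).mpr ⟨y, fun w hw => (hxy w hw).2⟩⟩
  | or a b iha ihb =>
    constructor
    · rintro (ha | hb)
      · obtain ⟨x, hx⟩ := (iha s).mp ha
        exact ⟨Sum.inl x, fun w hw => Or.inl ⟨x, hx w hw, rfl⟩⟩
      · obtain ⟨y, hy⟩ := (ihb s).mp hb
        exact ⟨Sum.inr y, fun w hw => Or.inr ⟨y, hy w hw, rfl⟩⟩
    · rintro ⟨x | y, hx⟩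
      · left
        refine (iha s).mpr ⟨x, fun w hw => ?_⟩
        rcases hx w hw with ⟨z, hz, hze⟩ | ⟨z, hz, hze⟩
        · cases Sum.inl.inj hze; exact hz
        · exact absurd hze (by simp)
      · right
        refine (ihb s).mpr ⟨y, fun w hw => ?_⟩
        rcases hx w hw with ⟨z, hz, hze⟩ | ⟨z, hz, hze⟩
        · exact absurd hze (by simp)
        · cases Sum.inr.inj hze; exact hz
  | imp a b iha ihb =>
    constructor
    · intro h
      have key : ∀ x : RS P a, ∃ y : RS P b,
          ∀ w ∈ s, x ∈ Res M w a → y ∈ Res M w b := by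
        intro x
        set t : Set W := {w ∈ s | x ∈ Res M w a} with ht
        have hta : Support P W M t a := (iha t).mpr ⟨x, fun w hw => hw.2⟩
        have htb : Support P W M t b := h t (fun w hw => hw.1) hta
        obtain ⟨y, hy⟩ := (ihb t).mp htb
        exact ⟨y, fun w hw hx => hy w ⟨hw, hx⟩⟩
      choose f hf using key
      refine ⟨f, fun w hw => ?_⟩
      show f '' Res M w a ⊆ Res M w b
      rintro y ⟨x, hx, rfl⟩
      exact hf x w hw hx
    · rintro ⟨f, hf⟩ t hts hta
      obtain ⟨x, hx⟩ := (iha t).mp hta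
      refine (ihb t).mpr ⟨f x, fun w hw => ?_⟩
      exact hf w (hts hw) ⟨x, hx w hw, rfl⟩

/-- main correspondence: `Γ ⊩ α` iff `Kh Γ ⊨ Kh α`. -/
theorem inq_entails_iff_kh_entails {P : Type} [Countable P]
    (Γ : Set (PLForm P)) (α : PLForm P) :
    InqEntails Γ α ↔ EntailsSet (DForm.kh '' Γ) (.kh α) := by
  constructor
  · intro hinq W M w h
    have hsup : ∀ γ ∈ Γ, Support P W M Set.univ γ := by
      intro γ hγ
      refine (support_iff M γ _).mpr ?_
      obtain ⟨x, hx⟩ := h (.kh γ) ⟨γ, hγ, rfl⟩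
      exact ⟨x, fun v _ => hx v⟩
    obtain ⟨x, hx⟩ := (support_iff M α _).mp (hinq W M Set.univ hsup)
    exact ⟨x, fun v => hx v (Set.mem_univ v)⟩
  · intro hent W M s hsup
    rcases Set.eq_empty_or_nonempty s with rfl | hs
    · exact (support_iff M α _).mpr ⟨(rs_nonempty α).some, by simp⟩
    · obtain ⟨w, hw⟩ := hs
      set M' : Model P s := M.restrict s ⟨w, hw⟩ with hM'
      have hres : ∀ (v : s) (β : PLForm P), Res M' v β = Res M v.1 β := by
        intro v β
        exact res_congr M' M v v.1 rfl β
      have hkh : ∀ γ ∈ Γ, Sat P s M' ⟨w, hw⟩ (.kh γ) := by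
        intro γ hγ
        obtain ⟨x, hx⟩ := (support_iff M γ s).mp (hsup γ hγ)
        exact ⟨x, fun v => (hres v γ) ▸ hx v.1 v.2⟩
      have := hent s M' ⟨w, hw⟩ (by rintro ψ ⟨γ, hγ, rfl⟩; exact hkh γ hγ)
      obtain ⟨x, hx⟩ := this
      refine (support_iff M α s).mpr ⟨x, fun v hv => ?_⟩
      have := hx ⟨v, hv⟩
      rwa [hres ⟨v, hv⟩ α] at this
end
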